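/- Let q be a power of an odd prime. For any multiplicative characters A, B, C of 𝔽_q^× and any λ ∈ 𝔽_q, ℙ_D^{(1)}[A; B; C; λ] = (AC)(−1)·B̄(−λ)·ℙ_D^{(1)}[C̄B; B; ĀB; λ⁻¹] + δ(λ)·J(A, CĀ), where λ⁻¹ denotes the inverse in 𝔽_q for λ ≠ 0 (when λ = 0 the first term on the right vanishes since B̄(0) = 0, so any convention for 0⁻¹, e.g. 0⁻¹ = 0, gives a valid statement). -/

import Mathlib

open Finset

/-- Jacobi sum `J(A,B) = Σ_x A(x) B(1-x)`. -/
noncomputable def jacobiSum' {F : Type} [Field F] [Fintype F] (A B : MulChar F ℂ) : ℂ :=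
  ∑ x : F, A x * B (1 - x)

/-- One-variable finite-field period function `ℙ_D^{(1)}[A; B; C; λ]`. -/
noncomputable def P1 {F : Type} [Field F] [Fintype F] (A B C : MulChar F ℂ) (l : F) : ℂ :=
  ∑ y : F, A y * (C * A⁻¹) (1 - y) * B⁻¹ (1 - l * y)

/-- Two-variable finite-field Appell–Lauricella period function `ℙ_D^{(2)}`. -/
noncomputable def P2 {F : Type} [Field F] [Fintype F] (A B₁ B₂ C : MulChar F ℂ) (l₁ l₂ : F) : ℂ :=
  ∑ y : F, A y * (C * A⁻¹) (1 - y) * B₁⁻¹ (1 - l₁ * y) * B₂⁻¹ (1 - l₂ * y)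

/-- n-variable finite-field Appell–Lauricella period function `ℙ_D^{(n)}`. -/
noncomputable def PDn {F : Type} [Field F] [Fintype F] (n : ℕ) (A : MulChar F ℂ)
    (B : Fin n → MulChar F ℂ) (C : MulChar F ℂ) (l : Fin n → F) : ℂ :=
  ∑ y : F, A y * (C * A⁻¹) (1 - y) * ∏ i, (B i)⁻¹ (1 - l i * y)

/-- Normalized two-variable Appell–Lauricella function `𝔽_D^{(2)}`. -/
noncomputable def F2 {F : Type} [Field F] [Fintype F] (A B₁ B₂ C : MulChar F ℂ) (l₁ l₂ : F) : ℂ :=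
  P2 A B₁ B₂ C l₁ l₂ / jacobiSum' A (C * A⁻¹)

/-- Normalized n-variable Appell–Lauricella function `𝔽_D^{(n)}`. -/
noncomputable def FDn {F : Type} [Field F] [Fintype F] (n : ℕ) (A : MulChar F ℂ)
    (B : Fin n → MulChar F ℂ) (C : MulChar F ℂ) (l : Fin n → F) : ℂ :=
  PDn n A B C l / jacobiSum' A (C * A⁻¹)

/-- Finite-field Gauss hypergeometric function `₂𝔽₁[A,B;C;λ] = ℙ_D^{(1)}[B;A;C;λ]/J(B,C B̄)`. -/
noncomputable def twoF1 {F : Type} [Field F] [Fintype F] (A B C : MulChar F ℂ) (l : F) : ℂ :=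
  P1 B A C l / jacobiSum' B (C * B⁻¹)

open scoped Classical in
/-- `δ(x) = 1` if `x = 0`, else `0`. -/
noncomputable def deltaC {F : Type} [Field F] [Fintype F] (x : F) : ℂ :=
  if x = 0 then 1 else 0

noncomputable instance {F : Type} [Field F] [Fintype F] : Fintype (MulChar F ℂ) :=
  Fintype.ofFinite _

/-- Character binomial coefficient `(A choose χ) = -χ(-1) J(A, χ̄)`. -/
noncomputable def charBinom {F : Type} [Field F] [Fintype F] (A χ : MulChar F ℂ) : ℂ :=
  -χ (-1) * jacobiSum' A χ⁻¹

/-- transformation `λ ↦ λ⁻¹` for `ℙ_D^{(1)}`. -/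
theorem statement_8 (F : Type) [Field F] [Fintype F] (hq : Odd (Fintype.card F))
    (A B C : MulChar F ℂ) (l : F) :
    P1 A B C l =
      (A * C) (-1) * B⁻¹ (-l) * P1 (C⁻¹ * B) B (A⁻¹ * B) l⁻¹ +
        deltaC l * jacobiSum' A (C * A⁻¹) := by
  rcases eq_or_ne l 0 with rfl | hl
  · have hB : B⁻¹ (0:F) = 0 := MulChar.map_nonunit _ (by simp)
    simp [deltaC, P1, jacobiSum', hB]
  · have hd : deltaC l = 0 := by simp [deltaC, hl]
    rw [hd, zero_mul, add_zero, P1, P1, ← Equiv.sum_comp (Equiv.inv F)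
      (fun y => A y * (C * A⁻¹) (1 - y) * B⁻¹ (1 - l * y)), Finset.mul_sum]
    refine Finset.sum_congr rfl fun y _ => ?_
    simp only [Equiv.inv_apply]
    rcases eq_or_ne y 0 with rfl | hy
    · simp [MulChar.map_nonunit, MulChar.mul_apply]
    · have h1 : (1:F) - y⁻¹ = (-1) * ((1 - y) * y⁻¹) := by field_simp; ring
      have h2 : (1:F) - l * y⁻¹ = (-l) * ((1 - l⁻¹ * y) * y⁻¹) := by field_simp; ring
      have hchar : (A⁻¹ * B) * (C⁻¹ * B)⁻¹ = C * A⁻¹ := by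
        rw [mul_inv, inv_inv, mul_mul_mul_comm, mul_inv_cancel, mul_one, mul_comm]
      have h3 : A y⁻¹ * (C * A⁻¹) y⁻¹ * B⁻¹ y⁻¹ = (C⁻¹ * B) y := by
        rw [← MulChar.mul_apply, ← MulChar.mul_apply, ← MulChar.inv_apply']
        congr 1
        rw [mul_inv, mul_inv, mul_inv, inv_inv, inv_inv, mul_left_comm A⁻¹ C⁻¹ A,
          inv_mul_cancel, mul_one]
      have h4 : (C * A⁻¹) (-1 : F) = (A * C) (-1 : F) := by
        rw [MulChar.mul_apply, MulChar.mul_apply, MulChar.inv_apply', inv_neg_one, mul_comm]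
      calc A y⁻¹ * (C * A⁻¹) (1 - y⁻¹) * B⁻¹ (1 - l * y⁻¹)
          = A y⁻¹ * ((C * A⁻¹) (-1) * ((C * A⁻¹) (1 - y) * (C * A⁻¹) y⁻¹)) *
            (B⁻¹ (-l) * (B⁻¹ (1 - l⁻¹ * y) * B⁻¹ y⁻¹)) := by
            rw [h1, h2, map_mul, map_mul, map_mul, map_mul]
        _ = (C * A⁻¹) (-1) * B⁻¹ (-l) *
            ((A y⁻¹ * (C * A⁻¹) y⁻¹ * B⁻¹ y⁻¹) * (C * A⁻¹) (1 - y) * B⁻¹ (1 - l⁻¹ * y)) := by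
            ring
        _ = (A * C) (-1) * B⁻¹ (-l) *
            ((C⁻¹ * B) y * ((A⁻¹ * B) * (C⁻¹ * B)⁻¹) (1 - y) * B⁻¹ (1 - l⁻¹ * y)) := by
            rw [h3, h4, hchar]
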